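/- For Lebesgue-almost every s ∈ (0,1), the forward orbit {Rⁿ(s) : n ≥ 0} is dense in (0,1). -/

import Mathlib

/-- The renormalization map `R : (0,1) → [0,1)`: `R(x) = 1 − x` if `x ≥ 1/2`, and
`R(x) = 1/(2x) − ⌊1/(2x)⌋` if `x < 1/2`. -/
noncomputable def Rmap (x : ℝ) : ℝ :=
  if x < 1/2 then 1 / (2 * x) - ⌊1 / (2 * x)⌋ else 1 - x

/-- The Gauss map `γ(x) = 1/x − ⌊1/x⌋`. -/
noncomputable def gaussMap (x : ℝ) : ℝ := 1 / x - ⌊1 / x⌋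

open MeasureTheory

open Set Filter Metric Topology

/-- Jump transformation: `T = R` on `(0,1/2)`, `T = R²` on `(1/2,1)`. -/
noncomputable def Tmap (x : ℝ) : ℝ :=
  if x < 1/2 then Int.fract (1/(2*x)) else Int.fract (1/(2*(1-x)))

lemma Rmap_of_lt (x : ℝ) (h : x < 1/2) : Rmap x = Int.fract (1/(2*x)) := by
  rw [Rmap, if_pos h, Int.fract]

lemma Rmap_of_ge (x : ℝ) (h : ¬ x < 1/2) : Rmap x = 1 - x := by
  rw [Rmap, if_neg h]

lemma Rmap_eq : Rmap = fun x => if x < 1/2 then Int.fract (1/(2*x)) else 1 - x := by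
  funext x
  by_cases h : x < 1/2
  · rw [Rmap_of_lt x h, if_pos h]
  · rw [Rmap_of_ge x h, if_neg h]

lemma measurable_Rmap : Measurable Rmap := by
  rw [Rmap_eq]
  apply Measurable.ite (measurableSet_lt measurable_id measurable_const)
  · exact measurable_fract.comp (measurable_const.div (measurable_const.mul measurable_id))
  · exact measurable_const.sub measurable_id

lemma measurable_Tmap : Measurable Tmap := by
  unfold Tmap
  apply Measurable.ite (measurableSet_lt measurable_id measurable_const)
  · exact measurable_fract.comp (measurable_const.div (measurable_const.mul measurable_id))
  · exact measurable_fract.comp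
      (measurable_const.div (measurable_const.mul (measurable_const.sub measurable_id)))

/-- Left inverse branch: for `k ≥ 1`, `g y = 1/(2(y+k))`, with `R (g y) = y`. -/
lemma left_branch (k : ℤ) (hk : 1 ≤ k) {y : ℝ} (hy : y ∈ Ioo (0:ℝ) 1) :
    1/(2*(y+(k:ℝ))) ∈ Ioo (0:ℝ) (1/2) ∧ Rmap (1/(2*(y+(k:ℝ)))) = y := by
  obtain ⟨hy0, hy1⟩ := hy
  have hk1 : (1:ℝ) ≤ (k:ℝ) := by exact_mod_cast hk
  have hD : (1:ℝ) < y + k := by linarith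
  have hD0 : (0:ℝ) < 2*(y+(k:ℝ)) := by linarith
  have hmem : 1/(2*(y+(k:ℝ))) ∈ Ioo (0:ℝ) (1/2) := by
    constructor
    · positivity
    · rw [div_lt_div_iff₀ hD0 (by norm_num)]
      linarith
  refine ⟨hmem, ?_⟩
  rw [Rmap_of_lt _ hmem.2]
  have : 1/(2*(1/(2*(y+(k:ℝ))))) = y + (k:ℝ) := by
    field_simp
  rw [this, Int.fract_add_intCast, Int.fract_eq_self.2 ⟨le_of_lt hy0, hy1⟩]

/-- Right inverse branch: for `k ≥ 1`, `g y = 1 - 1/(2(y+k))`, with `R² (g y) = y`. -/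
lemma right_branch (k : ℤ) (hk : 1 ≤ k) {y : ℝ} (hy : y ∈ Ioo (0:ℝ) 1) :
    (1 - 1/(2*(y+(k:ℝ)))) ∈ Ioo (1/2:ℝ) 1 ∧ Rmap (Rmap (1 - 1/(2*(y+(k:ℝ))))) = y := by
  obtain ⟨hm, hr⟩ := left_branch k hk hy
  constructor
  · exact ⟨by linarith [hm.2], by linarith [hm.1]⟩
  · have h2 : ¬ (1 - 1/(2*(y+(k:ℝ))) < 1/2) := by linarith [hm.2]
    rw [Rmap_of_ge _ h2]
    have : 1 - (1 - 1/(2*(y+(k:ℝ)))) = 1/(2*(y+(k:ℝ))) := by ring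
    rw [this, hr]

/-- The good set: all `T`-iterates stay in `(0,1) \ {1/2}`. -/
def Gset : Set ℝ := {x | ∀ n : ℕ, Tmap^[n] x ∈ Ioo (0:ℝ) 1 ∧ Tmap^[n] x ≠ 1/2}

lemma measurableSet_Gset : MeasurableSet Gset := by
  have hT : Measurable Tmap := measurable_Tmap
  have : Gset = ⋂ n : ℕ, (Tmap^[n]) ⁻¹' (Ioo (0:ℝ) 1 \ {1/2}) := by
    ext x; simp [Gset, Set.mem_diff]
  rw [this]
  exact MeasurableSet.iInter fun n =>
    (hT.iterate n) (measurableSet_Ioo.diff (measurableSet_singleton _))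

/-- Fibers of `Tmap` over `(0,1) \ {1/2}` are countable. -/
lemma fiber_countable (y : ℝ) :
    {x : ℝ | x ∈ Ioo (0:ℝ) 1 ∧ x ≠ 1/2 ∧ Tmap x = y}.Countable := by
  have h1 : {x : ℝ | x ∈ Ioo (0:ℝ) 1 ∧ x ≠ 1/2 ∧ Tmap x = y} ⊆
      (Set.range fun k : ℤ => 1/(2*(y+(k:ℝ)))) ∪ (Set.range fun k : ℤ => 1 - 1/(2*(y+(k:ℝ)))) := by
    rintro x ⟨⟨hx0, hx1⟩, hne, hTx⟩
    by_cases h : x < 1/2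
    · left
      rw [Tmap, if_pos h] at hTx
      refine ⟨⌊1/(2*x)⌋, ?_⟩
      have hx2 : (0:ℝ) < 2*x := by linarith
      have : y + (⌊1/(2*x)⌋:ℝ) = 1/(2*x) := by
        rw [← hTx, Int.fract]; ring
      show 1/(2*(y + (⌊1/(2*x)⌋:ℝ))) = x
      rw [this]
      field_simp
    · right
      rw [Tmap, if_neg h] at hTx
      have hx2 : (0:ℝ) < 2*(1-x) := by linarith
      refine ⟨⌊1/(2*(1-x))⌋, ?_⟩
      have : y + (⌊1/(2*(1-x))⌋:ℝ) = 1/(2*(1-x)) := by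
        rw [← hTx, Int.fract]; ring
      show 1 - 1/(2*(y + (⌊1/(2*(1-x))⌋:ℝ))) = x
      rw [this]
      field_simp
      ring
  exact Set.Countable.mono h1 ((Set.countable_range _).union (Set.countable_range _))

/-- Exceptional levels. -/
def Uset (n : ℕ) : Set ℝ :=
  {s | (∀ k < n, Tmap^[k] s ∈ Ioo (0:ℝ) 1 ∧ Tmap^[k] s ≠ 1/2) ∧
    (Tmap^[n] s = 0 ∨ Tmap^[n] s = 1/2)}

lemma countable_Uset (n : ℕ) : (Uset n).Countable := by
  induction n with
  | zero =>
    apply Set.Countable.mono _ ((Set.countable_singleton (0:ℝ)).union (Set.countable_singleton (1/2:ℝ)))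
    rintro s ⟨-, h | h⟩
    · left; simpa using h
    · right; simpa using h
  | succ n ih =>
    have hsub : Uset (n+1) ⊆ ⋃ y ∈ Uset n, {x : ℝ | x ∈ Ioo (0:ℝ) 1 ∧ x ≠ 1/2 ∧ Tmap x = y} := by
      rintro s ⟨hk, hend⟩
      have hs0 := hk 0 (Nat.succ_pos n)
      simp only [Function.iterate_zero_apply] at hs0
      have hmem : Tmap s ∈ Uset n := by
        refine ⟨fun k hkn => ?_, ?_⟩
        · have := hk (k+1) (by omega)
          rwa [Function.iterate_succ_apply] at this
        · rwa [Function.iterate_succ_apply] at hend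
      exact Set.mem_biUnion hmem ⟨hs0.1, hs0.2, rfl⟩
    exact Set.Countable.mono hsub (ih.biUnion fun y _ => fiber_countable y)

lemma countable_bad : (Ioo (0:ℝ) 1 \ Gset).Countable := by
  have hsub : Ioo (0:ℝ) 1 \ Gset ⊆ ⋃ n : ℕ, Uset n := by
    rintro s ⟨hs, hns⟩
    simp only [Gset, Set.mem_setOf_eq, not_forall] at hns
    obtain ⟨n, hn⟩ := hns
    have hex : ∃ n, ¬(Tmap^[n] s ∈ Ioo (0:ℝ) 1 ∧ Tmap^[n] s ≠ 1/2) := ⟨n, hn⟩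
    classical
    let m := Nat.find hex
    have hm := Nat.find_spec hex
    have hmin : ∀ k < m, Tmap^[k] s ∈ Ioo (0:ℝ) 1 ∧ Tmap^[k] s ≠ 1/2 := fun k hk => by
      have := Nat.find_min hex hk
      tauto
    refine Set.mem_iUnion.2 ⟨m, hmin, ?_⟩
    by_cases hh : Tmap^[m] s ∈ Ioo (0:ℝ) 1
    · right
      by_contra hne
      exact hm ⟨hh, hne⟩
    · left
      -- m ≥ 1 since s ∈ Ioo; then Tmap^[m] s ∈ [0,1), not in Ioo ⇒ = 0
      rcases Nat.eq_zero_or_pos m with h0 | hpos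
      · rw [h0] at hh; simp only [Function.iterate_zero_apply] at hh; exact absurd hs hh
      · obtain ⟨m', hm'⟩ := Nat.exists_eq_succ_of_ne_zero (Nat.pos_iff_ne_zero.1 hpos)
        rw [hm'] at hh ⊢
        rw [Function.iterate_succ_apply'] at hh ⊢
        set z := Tmap^[m'] s
        have hfr : Tmap z ∈ Ico (0:ℝ) 1 := by
          rw [Tmap]
          split <;> exact ⟨Int.fract_nonneg _, Int.fract_lt_one _⟩
        rcases eq_or_lt_of_le hfr.1 with he | hlt
        · exact he.symm
        · exact absurd ⟨hlt, hfr.2⟩ hh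
  exact Set.Countable.mono hsub (Set.countable_iUnion countable_Uset)

set_option maxHeartbeats 1000000 in
lemma mobius_left_comp (p q r s K y : ℝ) (hD : 0 < 2*(y+K))
    (hden1 : 0 < r*(1/(2*(y+K)))+s) (hden2 : 0 < 2*s*y+(r+2*K*s)) :
    (2*q*y+(p+2*K*q))/(2*s*y+(r+2*K*s)) = (p*(1/(2*(y+K)))+q)/(r*(1/(2*(y+K)))+s) := by
  rw [div_eq_div_iff hden2.ne' hden1.ne']
  have hyK : y + K ≠ 0 := by intro h; rw [h] at hD; linarith
  field_simp
  ring

set_option maxHeartbeats 1000000 in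
lemma mobius_right_comp (p q r s K y : ℝ) (hD : 0 < 2*(y+K))
    (hden1 : 0 < r*(1 - 1/(2*(y+K)))+s) (hden2 : 0 < (2*r+2*s)*y+((2*K-1)*r+2*K*s)) :
    ((2*p+2*q)*y+((2*K-1)*p+2*K*q))/((2*r+2*s)*y+((2*K-1)*r+2*K*s))
      = (p*(1 - 1/(2*(y+K)))+q)/(r*(1 - 1/(2*(y+K)))+s) := by
  rw [div_eq_div_iff hden2.ne' hden1.ne']
  have hyK : y + K ≠ 0 := by intro h; rw [h] at hD; linarith
  field_simp
  ring

/-- Depth-`n` cylinder of a good point, as an explicit Möbius map. -/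
lemma cylinder {x : ℝ} (hx : x ∈ Gset) (n : ℕ) :
    ∃ p q r s : ℝ, 0 ≤ p ∧ 0 ≤ q ∧ 0 ≤ r ∧ 0 < s ∧ r ≤ 2*s ∧ (2:ℝ)^n ≤ s ∧
      |p*s - q*r| = 2^n ∧
      (∀ y ∈ Ioo (0:ℝ) 1, (p*y+q)/(r*y+s) ∈ Ioo (0:ℝ) 1 ∧
        ∃ m : ℕ, Rmap^[m] ((p*y+q)/(r*y+s)) = y) ∧
      (p * Tmap^[n] x + q)/(r * Tmap^[n] x + s) = x := by
  induction n with
  | zero =>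
    refine ⟨1, 0, 0, 1, by norm_num, by norm_num, by norm_num, by norm_num, by norm_num,
      by norm_num, by norm_num, fun y hy => ⟨by simpa using hy, 0, by simp⟩, by simp⟩
  | succ n ih =>
    obtain ⟨p, q, r, s, hp, hq, hr, hs, hrs, h2n, hdet, hall, hpt⟩ := ih
    set t := Tmap^[n] x with htdef
    obtain ⟨ht01, thalf⟩ := hx n
    have hTt : Tmap t ∈ Ioo (0:ℝ) 1 := by
      have := (hx (n+1)).1
      rwa [Function.iterate_succ_apply'] at this
    have hTt0 : (0:ℝ) ≤ Tmap t := hTt.1.le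
    have hit : Tmap^[n+1] x = Tmap t := by rw [Function.iterate_succ_apply']
    have hpow : (2:ℝ)^(n+1) = 2*2^n := by ring
    by_cases hlt : t < 1/2
    · -- left branch
      set k := ⌊1/(2*t)⌋ with hkdef
      have ht0 : (0:ℝ) < t := ht01.1
      have h2t : (0:ℝ) < 2*t := by linarith
      have hk1 : (1:ℤ) ≤ k := by
        rw [hkdef]
        apply Int.le_floor.2
        rw [le_div_iff₀ h2t]
        push_cast; linarith
      set K := (k:ℝ) with hKdef
      have hK1 : (1:ℝ) ≤ K := by rw [hKdef]; exact_mod_cast hk1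
      have hK2 : (0:ℝ) ≤ 2*K-2 := by linarith
      have hTtK : Tmap t + K = 1/(2*t) := by
        rw [Tmap, if_pos hlt, Int.fract]; ring
      have hQ : (0:ℝ) ≤ p+2*K*q := by
        have := mul_nonneg (by linarith : (0:ℝ) ≤ 2*K) hq; linarith
      have hS : (0:ℝ) < r+2*K*s := add_pos_of_nonneg_of_pos hr (mul_pos (by linarith) hs)
      have h2s : 2*s ≤ r+2*K*s := by
        have := mul_nonneg hK2 hs.le; nlinarith
      refine ⟨2*q, p+2*K*q, 2*s, r+2*K*s, by positivity, hQ, by positivity, hS,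
        by linarith, by linarith, ?_, ?_, ?_⟩
      · have he : 2*q*(r+2*K*s) - (p+2*K*q)*(2*s) = -(2*(p*s - q*r)) := by ring
        rw [he, abs_neg, abs_mul, abs_two, hdet]; ring
      · intro y hy
        obtain ⟨hgmem, hgR⟩ := left_branch k hk1 hy
        have hg01 : 1/(2*(y+K)) ∈ Ioo (0:ℝ) 1 := ⟨hgmem.1, lt_trans hgmem.2 (by norm_num)⟩
        have hD : (0:ℝ) < 2*(y+K) := by linarith [hy.1]
        have hfun : (2*q*y+(p+2*K*q))/(2*s*y+(r+2*K*s))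
            = (p*(1/(2*(y+K)))+q)/(r*(1/(2*(y+K)))+s) :=
          mobius_left_comp p q r s K y hD (by positivity)
            (add_pos_of_nonneg_of_pos (mul_nonneg (by linarith) hy.1.le) hS)
        obtain ⟨hmem, m, hm⟩ := hall _ hg01
        refine ⟨by rw [hfun]; exact hmem, 1+m, ?_⟩
        rw [hfun, Function.iterate_add_apply, hm]
        simpa using hgR
      · rw [hit]
        have hgt : 1/(2*(Tmap t + K)) = t := by
          rw [hTtK]; field_simp
        have hD : (0:ℝ) < 2*(Tmap t + K) := by linarith
        have hfun : (2*q*(Tmap t)+(p+2*K*q))/(2*s*(Tmap t)+(r+2*K*s)) =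
            (p*(1/(2*(Tmap t + K)))+q)/(r*(1/(2*(Tmap t + K)))+s) :=
          mobius_left_comp p q r s K (Tmap t) hD (by positivity)
            (add_pos_of_nonneg_of_pos (mul_nonneg (by linarith) hTt0) hS)
        rw [hfun, hgt, hpt]
    · -- right branch
      have ht2 : 1/2 < t := lt_of_le_of_ne (not_lt.1 hlt) (Ne.symm thalf)
      have hu0 : (0:ℝ) < 1 - t := by linarith [ht01.2]
      have hu2 : (0:ℝ) < 2*(1-t) := by linarith
      set k := ⌊1/(2*(1-t))⌋ with hkdef
      have hk1 : (1:ℤ) ≤ k := by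
        rw [hkdef]
        apply Int.le_floor.2
        rw [le_div_iff₀ hu2]
        push_cast; linarith
      set K := (k:ℝ) with hKdef
      have hK1 : (1:ℝ) ≤ K := by rw [hKdef]; exact_mod_cast hk1
      have h2K1 : (0:ℝ) ≤ 2*K-1 := by linarith
      have h2K2 : (0:ℝ) ≤ 2*K-2 := by linarith
      have hTtK : Tmap t + K = 1/(2*(1-t)) := by
        rw [Tmap, if_neg hlt, Int.fract]; ring
      have hQ : (0:ℝ) ≤ (2*K-1)*p+2*K*q :=
        add_nonneg (mul_nonneg h2K1 hp) (mul_nonneg (by linarith) hq)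
      have hS : (0:ℝ) < (2*K-1)*r+2*K*s :=
        add_pos_of_nonneg_of_pos (mul_nonneg h2K1 hr) (mul_pos (by linarith) hs)
      have h2s : 2*s ≤ (2*K-1)*r+2*K*s := by
        have h1 := mul_nonneg h2K1 hr
        have h2 := mul_nonneg h2K2 hs.le
        nlinarith
      have hrr : 2*r+2*s ≤ 2*((2*K-1)*r+2*K*s) := by
        have h1 := mul_nonneg h2K2 hr
        have h2 := mul_nonneg h2K2 hs.le
        nlinarith
      refine ⟨2*p+2*q, (2*K-1)*p+2*K*q, 2*r+2*s, (2*K-1)*r+2*K*s, by positivity,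
        hQ, by positivity, hS, hrr, by linarith, ?_, ?_, ?_⟩
      · have he : (2*p+2*q)*((2*K-1)*r+2*K*s) - ((2*K-1)*p+2*K*q)*(2*r+2*s)
            = 2*(p*s - q*r) := by ring
        rw [he, abs_mul, abs_two, hdet]; ring
      · intro y hy
        obtain ⟨hgmem, hgR⟩ := right_branch k hk1 hy
        have hg01 : (1 - 1/(2*(y+K))) ∈ Ioo (0:ℝ) 1 := ⟨lt_trans (by norm_num) hgmem.1, hgmem.2⟩
        have hD : (0:ℝ) < 2*(y+K) := by linarith [hy.1]
        have hg2 : (0:ℝ) < 1 - 1/(2*(y+K)) := by linarith [hgmem.1]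
        have hfun : ((2*p+2*q)*y+((2*K-1)*p+2*K*q))/((2*r+2*s)*y+((2*K-1)*r+2*K*s))
            = (p*(1 - 1/(2*(y+K)))+q)/(r*(1 - 1/(2*(y+K)))+s) :=
          mobius_right_comp p q r s K y hD
            (add_pos_of_nonneg_of_pos (mul_nonneg hr hg2.le) hs)
            (add_pos_of_nonneg_of_pos (mul_nonneg (by linarith) hy.1.le) hS)
        obtain ⟨hmem, m, hm⟩ := hall _ hg01
        refine ⟨by rw [hfun]; exact hmem, 2+m, ?_⟩
        rw [hfun, Function.iterate_add_apply, hm]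
        have h2 : Rmap^[2] (1 - 1/(2*(y+K))) = Rmap (Rmap (1 - 1/(2*(y+K)))) := by
          rw [show (2:ℕ) = 1+1 from rfl, Function.iterate_add_apply]
          simp
        rw [h2, hgR]
      · rw [hit]
        have hgt : 1 - 1/(2*(Tmap t + K)) = t := by
          rw [hTtK]
          field_simp
          ring
        have hD : (0:ℝ) < 2*(Tmap t + K) := by linarith
        have hg2 : (0:ℝ) < 1 - 1/(2*(Tmap t + K)) := by rw [hgt]; linarith
        have hfun : ((2*p+2*q)*(Tmap t)+((2*K-1)*p+2*K*q))/((2*r+2*s)*(Tmap t)+((2*K-1)*r+2*K*s))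
            = (p*(1 - 1/(2*(Tmap t + K)))+q)/(r*(1 - 1/(2*(Tmap t + K)))+s) :=
          mobius_right_comp p q r s K (Tmap t) hD
            (add_pos_of_nonneg_of_pos (mul_nonneg hr hg2.le) hs)
            (add_pos_of_nonneg_of_pos (mul_nonneg (by linarith) hTt0) hS)
        rw [hfun, hgt, hpt]

lemma mobius_diff (p q r s c d : ℝ) (h1 : r*c+s ≠ 0) (h2 : r*d+s ≠ 0) :
    (p*c+q)/(r*c+s) - (p*d+q)/(r*d+s) = ((p*s-q*r)*(c-d))/((r*c+s)*(r*d+s)) := by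
  have h1' : c*r+s ≠ 0 := by rw [mul_comm]; exact h1
  have h2' : d*r+s ≠ 0 := by rw [mul_comm]; exact h2
  field_simp
  ring

/-- The set of good points whose `R`-orbit avoids `[a,b]` is Lebesgue-null. -/
lemma null_avoid (a b : ℝ) (ha : 0 < a) (hab : a < b) (hb : b < 1) :
    volume {s : ℝ | s ∈ Gset ∧ ∀ m : ℕ, Rmap^[m] s ∉ Icc a b} = 0 := by
  set B := {s : ℝ | s ∈ Gset ∧ ∀ m : ℕ, Rmap^[m] s ∉ Icc a b} with hBdef
  have hBmeas : MeasurableSet B := by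
    have : B = Gset ∩ ⋂ m : ℕ, (Rmap^[m]) ⁻¹' (Icc a b)ᶜ := by
      ext z; simp [hBdef, Set.mem_iInter]
    rw [this]
    exact measurableSet_Gset.inter (MeasurableSet.iInter fun m =>
      (measurable_Rmap.iterate m) measurableSet_Icc.compl)
  by_contra hμ
  haveI : NeBot (ae ((volume : Measure ℝ).restrict B)) :=
    ae_neBot.2 (fun h => hμ (Measure.restrict_eq_zero.1 h))
  have hdens := Besicovitch.ae_tendsto_measure_inter_div (volume : Measure ℝ) B
  obtain ⟨x, hx, hxB⟩ := (hdens.and (ae_restrict_mem hBmeas)).exists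
  have hxG : x ∈ Gset := hxB.1
  -- Key estimate for every depth n
  have key : ∀ n : ℕ, ∃ ρ : ℝ, 0 < ρ ∧ ρ ≤ (1/2)^n ∧
      ENNReal.ofReal ((b-a)/9 * ρ) + volume (B ∩ closedBall x ρ) ≤ volume (closedBall x ρ) := by
    intro n
    obtain ⟨p, q, r, s, hp, hq, hr, hs, hrs, h2n, hdet, hall, hpt⟩ := cylinder hxG n
    set t := Tmap^[n] x with htdef
    have ht01 : t ∈ Ioo (0:ℝ) 1 := (hxG n).1
    have h2npos : (0:ℝ) < 2^n := by positivity
    refine ⟨2^n / s^2, by positivity, ?_, ?_⟩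
    · have hss : ((2:ℝ)^n)^2 ≤ s^2 := by
        apply pow_le_pow_left₀ (by positivity) h2n
      calc (2:ℝ)^n / s^2 ≤ 2^n / ((2:ℝ)^n)^2 := by
            apply div_le_div_of_nonneg_left h2npos.le (by positivity) hss
        _ = (1/2)^n := by
            rw [pow_two]
            field_simp
            rw [← mul_pow]; norm_num
    · set ρ := (2:ℝ)^n / s^2 with hρdef
      set f : ℝ → ℝ := fun y => (p*y+q)/(r*y+s) with hfdef
      have hden : ∀ c : ℝ, 0 ≤ c → (0:ℝ) < r*c+s :=
        fun c hc => add_pos_of_nonneg_of_pos (mul_nonneg hr hc) hs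
      -- image of [a,b] lies in closedBall x ρ, outside B
      have himg : f '' (Icc a b) ⊆ (closedBall x ρ) \ B := by
        rintro z ⟨y, hy, rfl⟩
        have hy01 : y ∈ Ioo (0:ℝ) 1 := ⟨lt_of_lt_of_le ha hy.1, lt_of_le_of_lt hy.2 hb⟩
        obtain ⟨hfmem, m, hm⟩ := hall y hy01
        constructor
        · -- distance bound
          rw [mem_closedBall, Real.dist_eq, ← hpt]
          have hdiff := mobius_diff p q r s y t (hden y hy01.1.le).ne' (hden t ht01.1.le).ne'
          rw [hfdef]
          simp only []
          rw [hdiff, abs_div, abs_mul, hdet]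
          rw [abs_of_pos (mul_pos (hden y hy01.1.le) (hden t ht01.1.le))]
          have hyt : |y - t| ≤ 1 := by
            rw [abs_le]
            constructor <;> nlinarith [ht01.1, ht01.2, hy01.1, hy01.2]
          have hd1 : s*s ≤ (r*y+s)*(r*t+s) := by
            have h1 : s ≤ r*y+s := by nlinarith [mul_nonneg hr hy01.1.le]
            have h2 : s ≤ r*t+s := by nlinarith [mul_nonneg hr ht01.1.le]
            nlinarith
          rw [hρdef, pow_two]
          apply div_le_div₀ (by positivity) ?_ (by positivity) hd1
          nlinarith [abs_nonneg (y - t)]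
        · -- not in B
          intro hzB
          exact hzB.2 m (by rw [hm]; exact hy)
      -- the image contains an interval of length ≥ (b-a)/9 * ρ
      have hcont : ContinuousOn f (uIcc a b) := by
        apply ContinuousOn.div
        · exact (continuous_const.mul continuous_id').add continuous_const |>.continuousOn
        · exact (continuous_const.mul continuous_id').add continuous_const |>.continuousOn
        · intro y hy
          rw [uIcc_of_le hab.le] at hy
          exact (hden y (le_trans ha.le hy.1)).ne'
      have hIVT : uIcc (f a) (f b) ⊆ f '' (Icc a b) := by
        have := intermediate_value_uIcc hcont
        rwa [uIcc_of_le hab.le] at this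
      have hb0 : (0:ℝ) ≤ b := by linarith
      have hlen : (b-a)/9 * ρ ≤ |f b - f a| := by
        have hdiff := mobius_diff p q r s b a (hden b hb0).ne' (hden a ha.le).ne'
        rw [hfdef]
        simp only []
        rw [hdiff, abs_div, abs_mul, hdet]
        rw [abs_of_pos (mul_pos (hden b hb0) (hden a ha.le))]
        rw [abs_of_pos (by linarith : (0:ℝ) < b - a)]
        have hub : (r*b+s)*(r*a+s) ≤ 9*s^2 := by
          have h1 : r*b+s ≤ 3*s := by nlinarith [mul_nonneg hr (by linarith : (0:ℝ) ≤ 1 - b)]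
          have h2 : r*a+s ≤ 3*s := by nlinarith [mul_nonneg hr (by linarith : (0:ℝ) ≤ 1 - a)]
          nlinarith [hden b hb0, hden a ha.le]
        rw [hρdef, div_mul_div_comm]
        exact div_le_div₀ (mul_nonneg (by positivity) (by linarith)) (le_of_eq (by ring))
          (mul_pos (hden b hb0) (hden a ha.le)) hub
      -- combine
      have hvol1 : ENNReal.ofReal ((b-a)/9 * ρ) ≤ volume ((closedBall x ρ) \ B) := by
        calc ENNReal.ofReal ((b-a)/9 * ρ) ≤ volume (uIcc (f a) (f b)) := by
              rw [Real.volume_interval]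
              exact ENNReal.ofReal_le_ofReal hlen
          _ ≤ volume (f '' (Icc a b)) := measure_mono hIVT
          _ ≤ volume ((closedBall x ρ) \ B) := measure_mono himg
      have hsplit : volume ((closedBall x ρ) ∩ B) + volume ((closedBall x ρ) \ B)
          = volume (closedBall x ρ) := measure_inter_add_diff _ hBmeas
      rw [Set.inter_comm B]
      calc ENNReal.ofReal ((b-a)/9 * ρ) + volume ((closedBall x ρ) ∩ B)
          ≤ volume ((closedBall x ρ) \ B) + volume ((closedBall x ρ) ∩ B) := by
            exact add_le_add hvol1 le_rfl
        _ = volume (closedBall x ρ) := by rw [add_comm]; exact hsplit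
  choose ρ hρpos hρle hρkey using key
  -- ratio bound
  set C := ENNReal.ofReal (1 - (b-a)/18) with hC
  have hCbound : ∀ n : ℕ,
      volume (B ∩ closedBall x (ρ n)) / volume (closedBall x (ρ n)) ≤ C := by
    intro n
    have hcb : volume (closedBall x (ρ n)) = ENNReal.ofReal (2 * ρ n) :=
      Real.volume_closedBall x (ρ n)
    have h1 : volume (B ∩ closedBall x (ρ n))
        ≤ ENNReal.ofReal (2 * ρ n) - ENNReal.ofReal ((b-a)/9 * ρ n) := by
      apply (ENNReal.cancel_of_ne ENNReal.ofReal_ne_top).le_tsub_of_add_le_left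
      rw [← hcb]
      exact hρkey n
    have h2 : ENNReal.ofReal (2 * ρ n) - ENNReal.ofReal ((b-a)/9 * ρ n)
        = ENNReal.ofReal (2 * ρ n - (b-a)/9 * ρ n) := by
      rw [ENNReal.ofReal_sub]
      exact mul_nonneg (div_nonneg (by linarith) (by norm_num)) (hρpos n).le
    calc volume (B ∩ closedBall x (ρ n)) / volume (closedBall x (ρ n))
        ≤ ENNReal.ofReal (2 * ρ n - (b-a)/9 * ρ n) / ENNReal.ofReal (2 * ρ n) := by
          rw [hcb]
          exact ENNReal.div_le_div_right (h2 ▸ h1) _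
      _ = ENNReal.ofReal ((2 * ρ n - (b-a)/9 * ρ n) / (2 * ρ n)) := by
          rw [ENNReal.ofReal_div_of_pos]
          linarith [hρpos n]
      _ = C := by
          rw [hC]
          congr 1
          have := hρpos n
          field_simp
          ring
  have htend : Tendsto (fun n => volume (B ∩ closedBall x (ρ n)) / volume (closedBall x (ρ n)))
      atTop (𝓝 1) := by
    apply hx.comp
    rw [tendsto_nhdsWithin_iff]
    constructor
    · apply squeeze_zero (fun n => (hρpos n).le) hρle
      exact tendsto_pow_atTop_nhds_zero_of_lt_one (by norm_num) (by norm_num)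
    · exact Eventually.of_forall fun n => hρpos n
  have h1C : (1:ENNReal) ≤ C := le_of_tendsto' htend hCbound
  have hClt : C < 1 := by
    rw [hC]
    apply ENNReal.ofReal_lt_one.2
    linarith
  exact absurd h1C (not_le.2 hClt)

/-- For Lebesgue-almost every `s ∈ (0,1)`, the forward orbit
`{Rⁿ(s) : n ≥ 0}` is dense in `(0,1)`. -/
theorem R_orbit_dense_ae :
    ∀ᵐ s ∂(volume : Measure ℝ), s ∈ Set.Ioo (0 : ℝ) 1 →
      Set.Ioo (0 : ℝ) 1 ⊆ closure {x : ℝ | ∃ n : ℕ, Rmap^[n] s = x} := by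
  set N1 : Set ℝ := Ioo (0:ℝ) 1 \ Gset with hN1def
  set N2 : Set ℝ := ⋃ (a : ℚ) (b : ℚ),
    {s : ℝ | s ∈ Gset ∧ ((0:ℝ) < (a:ℝ) ∧ (a:ℝ) < (b:ℝ) ∧ (b:ℝ) < 1) ∧
      ∀ m : ℕ, Rmap^[m] s ∉ Icc (a:ℝ) (b:ℝ)} with hN2def
  have hnull : volume (N1 ∪ N2) = 0 := by
    apply measure_union_null
    · exact countable_bad.measure_zero _
    · apply measure_iUnion_null
      intro a
      apply measure_iUnion_null
      intro b
      by_cases hcond : (0:ℝ) < (a:ℝ) ∧ (a:ℝ) < (b:ℝ) ∧ (b:ℝ) < 1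
      · apply measure_mono_null _ (null_avoid (a:ℝ) (b:ℝ) hcond.1 hcond.2.1 hcond.2.2)
        rintro s ⟨hs1, -, hs3⟩
        exact ⟨hs1, hs3⟩
      · apply measure_mono_null _ (measure_empty (μ := (volume : Measure ℝ)))
        rintro s ⟨-, hc, -⟩
        exact absurd hc hcond
  have hae : ∀ᵐ s ∂(volume : Measure ℝ), s ∉ N1 ∪ N2 := compl_mem_ae_iff.2 hnull
  filter_upwards [hae] with s hsN hs
  have hsG : s ∈ Gset := by
    by_contra hG
    exact hsN (Or.inl ⟨hs, hG⟩)
  intro t ht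
  rw [Metric.mem_closure_iff]
  intro ε hε
  have hlo : max (t - ε) 0 < t := by
    rcases ht with ⟨ht0, ht1⟩
    apply max_lt <;> linarith
  have hhi : t < min (t + ε) 1 := by
    rcases ht with ⟨ht0, ht1⟩
    apply lt_min <;> linarith
  obtain ⟨a, ha1, ha2⟩ := exists_rat_btwn hlo
  obtain ⟨b, hb1, hb2⟩ := exists_rat_btwn hhi
  have hcond : (0:ℝ) < (a:ℝ) ∧ (a:ℝ) < (b:ℝ) ∧ (b:ℝ) < 1 := by
    refine ⟨lt_of_le_of_lt (le_max_right _ _) ha1, by linarith,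
      lt_of_lt_of_le hb2 (min_le_right _ _)⟩
  have hsV : s ∉ {s : ℝ | s ∈ Gset ∧ ((0:ℝ) < (a:ℝ) ∧ (a:ℝ) < (b:ℝ) ∧ (b:ℝ) < 1) ∧
      ∀ m : ℕ, Rmap^[m] s ∉ Icc (a:ℝ) (b:ℝ)} := by
    intro hmem
    apply hsN
    right
    rw [hN2def]
    exact Set.mem_iUnion.2 ⟨a, Set.mem_iUnion.2 ⟨b, hmem⟩⟩
  have : ¬ (∀ m : ℕ, Rmap^[m] s ∉ Icc (a:ℝ) (b:ℝ)) := fun h => hsV ⟨hsG, hcond, h⟩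
  push_neg at this
  obtain ⟨m, hm⟩ := this
  refine ⟨Rmap^[m] s, ⟨m, rfl⟩, ?_⟩
  rw [Real.dist_eq, abs_lt]
  have h1 : t - ε ≤ max (t - ε) 0 := le_max_left _ _
  have h2 : min (t + ε) 1 ≤ t + ε := min_le_left _ _
  rcases hm with ⟨hma, hmb⟩
  constructor <;> linarith
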